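/- Fix x ∈ ℝ with x ≠ 0. There exist constants c, C > 0 and δ > 0 (depending only on x) such that for every σ ∈ (0,1) with 1 − σ² ≤ δ: c·(1−σ²) ≤ sgn(x)·(Φ_σ(x) − Φ(x)) ≤ C·(1−σ²), where Φ is the CDF of N(0,1) and Φ_σ is the CDF of N(0,σ²). -/

import Mathlib

open MeasureTheory ProbabilityTheory Filter

noncomputable section

/-- The standard Gaussian measure `N(0, I_d)` on `ℝ^d`. -/
def stdGaussian (d : ℕ) : Measure (Fin d → ℝ) :=
  Measure.pi fun _ => gaussianReal 0 1

/-- The law of `n` i.i.d. samples from `N(0, I_d)`. -/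
def iidGaussian (d n : ℕ) : Measure (Fin n → Fin d → ℝ) :=
  Measure.pi fun _ => stdGaussian d

/-- Euclidean inner product on `ℝ^d`. -/
def dotp {d : ℕ} (x y : Fin d → ℝ) : ℝ := ∑ i, x i * y i

/-- `τ` is the threshold for edge-density `p` in dimension `d`, i.e.
`P(d^{-1/2}⟨x, y⟩ ≤ τ) = p` for independent `x, y ~ N(0, I_d)`. -/
def IsThreshold (d : ℕ) (p τ : ℝ) : Prop :=
  ((stdGaussian d).prod (stdGaussian d))
    {z | dotp z.1 z.2 / Real.sqrt d ≤ τ} = ENNReal.ofReal p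

/-- The Bernoulli(p) distribution, as a measure on `ℝ` supported on `{0, 1}`. -/
def bern (p : ℝ) : Measure ℝ :=
  ENNReal.ofReal p • Measure.dirac 1 + ENNReal.ofReal (1 - p) • Measure.dirac 0

instance bern.instIsFiniteMeasure (p : ℝ) : IsFiniteMeasure (bern p) := by
  refine ⟨?_⟩
  simp only [bern, Measure.add_apply, Measure.smul_apply, smul_eq_mul,
    Measure.dirac_apply_of_mem (Set.mem_univ _), mul_one]
  exact ENNReal.add_lt_top.2 ⟨ENNReal.ofReal_lt_top, ENNReal.ofReal_lt_top⟩

/-- `M(n, m, p)`: the law of an `n × m` matrix with i.i.d. Bernoulli(p) entries. -/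
def MDist (n m : ℕ) (p : ℝ) : Measure (Fin n → Fin m → ℝ) :=
  Measure.pi fun _ => Measure.pi fun _ => bern p

/-- `W(n, m, p, d)` (with connection threshold `τ`): the law of the bipartite
Gaussian random geometric graph `W_{u,v} = 1(d^{-1/2}⟨x_u, x'_v⟩ ≤ τ)`. -/
def WDist (n m : ℕ) (d : ℕ) (τ : ℝ) : Measure (Fin n → Fin m → ℝ) :=
  ((iidGaussian d n).prod (iidGaussian d m)).map
    (fun X => fun u v => if dotp (X.1 u) (X.2 v) / Real.sqrt d ≤ τ then (1 : ℝ) else 0)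

/-- `W_M(n, m, p, d)`: the masked model with a fixed (known) mask `Mk`,
`W ⊙ Mk + B ⊙ (1 - Mk)` with `W ~ W(n,m,p,d)` and `B ~ M(n,m,p)` independent. -/
def WMask (n m : ℕ) (p : ℝ) (d : ℕ) (τ : ℝ) (Mk : Fin n → Fin m → ℝ) :
    Measure (Fin n → Fin m → ℝ) :=
  ((WDist n m d τ).prod (MDist n m p)).map
    (fun z => fun u v => Mk u v * z.1 u v + (1 - Mk u v) * z.2 u v)

/-- `W(n, m, q, p, d)`: the masked model with an unknown random Bernoulli(q) mask,
`W ⊙ M + B ⊙ (1 - M)` with `W ~ W(n,m,p,d)`, `M ~ Bern(q)^{n×m}`, `B ~ M(n,m,p)`,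
all independent. -/
def WNoisy (n m : ℕ) (q p : ℝ) (d : ℕ) (τ : ℝ) : Measure (Fin n → Fin m → ℝ) :=
  ((MDist n m q).prod ((WDist n m d τ).prod (MDist n m p))).map
    (fun z => fun u v => z.1 u v * z.2.1 u v + (1 - z.1 u v) * z.2.2 u v)

/-- Total variation distance between two measures. -/
def tvDist {Ω : Type*} [MeasurableSpace Ω] (μ ν : Measure Ω) : ℝ :=
  ⨆ s : {s : Set Ω // MeasurableSet s}, |(μ s.1).toReal - (ν s.1).toReal|

end

/-- The CDF of the centered Gaussian distribution `N(0, σ²)` on `ℝ`. -/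
noncomputable def gaussCDF (σ x : ℝ) : ℝ :=
  ((gaussianReal 0 (σ ^ 2).toNNReal) (Set.Iic x)).toReal

private lemma pdf_anti {s t : ℝ} (h : |s| ≤ |t|) :
    gaussianPDFReal 0 1 t ≤ gaussianPDFReal 0 1 s := by
  have h2 : s ^ 2 ≤ t ^ 2 := by
    rw [← sq_abs s, ← sq_abs t]
    exact pow_le_pow_left₀ (abs_nonneg _) h 2
  simp only [gaussianPDFReal, sub_zero, NNReal.coe_one, mul_one]
  refine mul_le_mul_of_nonneg_left (Real.exp_le_exp.2 ?_) (by positivity)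
  linarith

private lemma pdf_even (t : ℝ) : gaussianPDFReal 0 1 (-t) = gaussianPDFReal 0 1 t := by
  simp [gaussianPDFReal, neg_sq]

private lemma gaussCDF_scale (σ x : ℝ) (hσ : 0 < σ) :
    gaussCDF σ x = ((gaussianReal 0 1) (Set.Iic (x / σ))).toReal := by
  have h : (σ ^ 2).toNNReal = NNReal.mk (σ ^ 2) (sq_nonneg σ) := by
    ext
    simp [Real.coe_toNNReal _ (sq_nonneg σ)]
  have hmap := gaussianReal_map_const_mul (μ := 0) (v := 1) σ
  rw [mul_zero, mul_one] at hmap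
  rw [gaussCDF, h, ← hmap, Measure.map_apply (measurable_const_mul σ) measurableSet_Iic]
  congr 2
  ext t
  simp only [Set.mem_preimage, Set.mem_Iic]
  exact (le_div_iff₀' hσ).symm

private lemma cdf_diff (a b : ℝ) (hab : a ≤ b) :
    ((gaussianReal 0 1) (Set.Iic b)).toReal - ((gaussianReal 0 1) (Set.Iic a)).toReal
      = ∫ t in Set.Ioc a b, gaussianPDFReal 0 1 t := by
  have h1 : (gaussianReal 0 1) (Set.Iic b)
      = (gaussianReal 0 1) (Set.Iic a) + (gaussianReal 0 1) (Set.Ioc a b) := by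
    rw [← measure_union (Set.Iic_disjoint_Ioc le_rfl) measurableSet_Ioc,
      Set.Iic_union_Ioc_eq_Iic hab]
  have h2 : (gaussianReal 0 1) (Set.Ioc a b)
      = ENNReal.ofReal (∫ t in Set.Ioc a b, gaussianPDFReal 0 1 t) :=
    gaussianReal_apply_eq_integral 0 one_ne_zero _
  rw [h1, ENNReal.toReal_add (measure_ne_top _ _) (measure_ne_top _ _), h2,
    ENNReal.toReal_ofReal
      (setIntegral_nonneg measurableSet_Ioc fun t _ => gaussianPDFReal_nonneg 0 1 t)]
  ring

private lemma aux_bounds (y σ : ℝ) (hy : 0 < y) (hσ0 : 0 < σ) (hσ1 : σ < 1)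
    (hδ : 1 - σ ^ 2 ≤ 1 / 2) :
    y * gaussianPDFReal 0 1 (Real.sqrt 2 * y) / 2 * (1 - σ ^ 2)
      ≤ ∫ t in Set.Ioc y (y / σ), gaussianPDFReal 0 1 t ∧
    (∫ t in Set.Ioc y (y / σ), gaussianPDFReal 0 1 t)
      ≤ y * gaussianPDFReal 0 1 y * (1 - σ ^ 2) := by
  have hs2 : Real.sqrt 2 ^ 2 = 2 := Real.sq_sqrt (by norm_num)
  have hs2pos : (0 : ℝ) < Real.sqrt 2 := Real.sqrt_pos.2 (by norm_num)
  have hσ2 : (1 : ℝ) / 2 ≤ σ ^ 2 := by linarith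
  have h1σ : 1 ≤ σ * Real.sqrt 2 := by nlinarith [mul_pos hσ0 hs2pos]
  have hab : y ≤ y / σ := (le_div_iff₀ hσ0).2 (by nlinarith)
  have hb : y / σ ≤ Real.sqrt 2 * y := (div_le_iff₀ hσ0).2 (by nlinarith)
  have hint : IntegrableOn (gaussianPDFReal 0 1) (Set.Ioc y (y / σ)) :=
    (integrable_gaussianPDFReal 0 1).integrableOn
  have hvol : (volume (Set.Ioc y (y / σ))).toReal = y / σ - y := by
    rw [Real.volume_Ioc, ENNReal.toReal_ofReal (by linarith)]
  have hlow : ∀ t ∈ Set.Ioc y (y / σ),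
      gaussianPDFReal 0 1 (Real.sqrt 2 * y) ≤ gaussianPDFReal 0 1 t := by
    intro t ht
    refine pdf_anti ?_
    rw [abs_of_pos (hy.trans ht.1), abs_of_pos (by positivity)]
    exact ht.2.trans hb
  have hhigh : ∀ t ∈ Set.Ioc y (y / σ),
      gaussianPDFReal 0 1 t ≤ gaussianPDFReal 0 1 y := by
    intro t ht
    refine pdf_anti ?_
    rw [abs_of_pos hy, abs_of_pos (hy.trans ht.1)]
    exact ht.1.le
  have hconstlo :
      ∫ _ in Set.Ioc y (y / σ), gaussianPDFReal 0 1 (Real.sqrt 2 * y)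
        ≤ ∫ t in Set.Ioc y (y / σ), gaussianPDFReal 0 1 t :=
    setIntegral_mono_on
      (integrableOn_const measure_Ioc_lt_top.ne) hint measurableSet_Ioc hlow
  have hconsthi :
      (∫ t in Set.Ioc y (y / σ), gaussianPDFReal 0 1 t)
        ≤ ∫ _ in Set.Ioc y (y / σ), gaussianPDFReal 0 1 y :=
    setIntegral_mono_on hint
      (integrableOn_const measure_Ioc_lt_top.ne) measurableSet_Ioc hhigh
  rw [setIntegral_const, smul_eq_mul, measureReal_def, hvol] at hconstlo
  rw [setIntegral_const, smul_eq_mul, measureReal_def, hvol] at hconsthi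
  have hlen1 : y * (1 - σ ^ 2) / 2 ≤ y / σ - y := by
    have e : y / σ - y = (y - y * σ) / σ := by field_simp
    rw [e, le_div_iff₀ hσ0]
    nlinarith [mul_nonneg (mul_nonneg hy.le (by linarith : (0:ℝ) ≤ 1 - σ))
      (by nlinarith : (0:ℝ) ≤ 2 - σ - σ ^ 2)]
  have hlen2 : y / σ - y ≤ y * (1 - σ ^ 2) := by
    have e : y / σ - y = (y - y * σ) / σ := by field_simp
    rw [e, div_le_iff₀ hσ0]
    nlinarith [mul_nonneg (mul_nonneg hy.le (by linarith : (0:ℝ) ≤ 1 - σ))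
      (by nlinarith : (0:ℝ) ≤ σ + σ ^ 2 - 1)]
  constructor
  · calc y * gaussianPDFReal 0 1 (Real.sqrt 2 * y) / 2 * (1 - σ ^ 2)
        = y * (1 - σ ^ 2) / 2 * gaussianPDFReal 0 1 (Real.sqrt 2 * y) := by ring
      _ ≤ (y / σ - y) * gaussianPDFReal 0 1 (Real.sqrt 2 * y) :=
        mul_le_mul_of_nonneg_right hlen1 (gaussianPDFReal_nonneg 0 1 _)
      _ ≤ _ := hconstlo
  · calc (∫ t in Set.Ioc y (y / σ), gaussianPDFReal 0 1 t)
        ≤ (y / σ - y) * gaussianPDFReal 0 1 y := hconsthi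
      _ ≤ y * (1 - σ ^ 2) * gaussianPDFReal 0 1 y :=
        mul_le_mul_of_nonneg_right hlen2 (gaussianPDFReal_nonneg 0 1 _)
      _ = y * gaussianPDFReal 0 1 y * (1 - σ ^ 2) := by ring

/-- Fix `x ≠ 0`. There are `c, C, δ > 0` (depending only on `x`) such
that for all `σ ∈ (0,1)` with `1 − σ² ≤ δ`:
`c·(1−σ²) ≤ sgn(x)·(Φ_σ(x) − Φ(x)) ≤ C·(1−σ²)`. -/
theorem gaussCDF_variance_perturbation (x : ℝ) (hx : x ≠ 0) :
    ∃ c > (0 : ℝ), ∃ C > (0 : ℝ), ∃ δ > (0 : ℝ), ∀ σ : ℝ, 0 < σ → σ < 1 →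
      1 - σ ^ 2 ≤ δ →
        c * (1 - σ ^ 2) ≤ Real.sign x * (gaussCDF σ x - gaussCDF 1 x) ∧
        Real.sign x * (gaussCDF σ x - gaussCDF 1 x) ≤ C * (1 - σ ^ 2) := by
  have hpdfpos1 : 0 < gaussianPDFReal 0 1 (Real.sqrt 2 * |x|) :=
    gaussianPDFReal_pos 0 1 _ one_ne_zero
  have hpdfpos2 : 0 < gaussianPDFReal 0 1 |x| := gaussianPDFReal_pos 0 1 _ one_ne_zero
  have hxabs : 0 < |x| := abs_pos.2 hx
  refine ⟨|x| * gaussianPDFReal 0 1 (Real.sqrt 2 * |x|) / 2,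
    by positivity, |x| * gaussianPDFReal 0 1 |x|, by positivity, 1 / 2, by norm_num, ?_⟩
  intro σ hσ0 hσ1 hδ
  rcases hx.lt_or_gt with hxneg | hxpos
  · -- x < 0
    have habs : |x| = -x := abs_of_neg hxneg
    have hba : x / σ ≤ x := (div_le_iff₀ hσ0).2 (by nlinarith)
    have hrw : Real.sign x * (gaussCDF σ x - gaussCDF 1 x)
        = ∫ t in Set.Ioc (x / σ) x, gaussianPDFReal 0 1 t := by
      rw [Real.sign_of_neg hxneg, gaussCDF_scale σ x hσ0, gaussCDF_scale 1 x one_pos,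
        div_one, neg_one_mul, neg_sub, cdf_diff (x / σ) x hba]
    have heq : (∫ t in Set.Ioc (x / σ) x, gaussianPDFReal 0 1 t)
        = ∫ t in Set.Ioc (-x) (-x / σ), gaussianPDFReal 0 1 t := by
      have h1 : -x ≤ -x / σ := by
        rw [neg_div]
        linarith
      calc (∫ t in Set.Ioc (x / σ) x, gaussianPDFReal 0 1 t)
          = ∫ t in (x / σ)..x, gaussianPDFReal 0 1 t :=
            (intervalIntegral.integral_of_le hba).symm
        _ = ∫ t in (x / σ)..x, gaussianPDFReal 0 1 (-t) := by
            simp only [pdf_even]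
        _ = ∫ t in (-x)..(-(x / σ)), gaussianPDFReal 0 1 t :=
            intervalIntegral.integral_comp_neg fun t => gaussianPDFReal 0 1 t
        _ = ∫ t in (-x)..(-x / σ), gaussianPDFReal 0 1 t := by rw [neg_div]
        _ = ∫ t in Set.Ioc (-x) (-x / σ), gaussianPDFReal 0 1 t :=
            intervalIntegral.integral_of_le h1
    have := aux_bounds (-x) σ (by linarith) hσ0 hσ1 hδ
    rw [hrw, heq, habs]
    exact this
  · -- 0 < x
    have habs : |x| = x := abs_of_pos hxpos
    have hab : x ≤ x / σ := (le_div_iff₀ hσ0).2 (by nlinarith)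
    have hrw : Real.sign x * (gaussCDF σ x - gaussCDF 1 x)
        = ∫ t in Set.Ioc x (x / σ), gaussianPDFReal 0 1 t := by
      rw [Real.sign_of_pos hxpos, one_mul, gaussCDF_scale σ x hσ0,
        gaussCDF_scale 1 x one_pos, div_one, cdf_diff x (x / σ) hab]
    have := aux_bounds x σ hxpos hσ0 hσ1 hδ
    rw [hrw, habs]
    exact this
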